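/- arXiv:2406.06421 — 2 statements merged into one kernel-verified Lean document; each statement's English description precedes it below -/
import Mathlib

section
/- Let H be a k-uniform hypergraph and v ∈ V(H) with incident edges e₁,…,e_m, where e_i = {v, u_{i,1}, …, u_{i,k−1}}. For a uniformly random matching M of H, P_H(v̄) = (1 + Σ_{i∈[m]} Π_{j∈[k−1]} P_{H − {v, u_{i,1}, …, u_{i,j−1}}}(ū_{i,j}))^{−1}. -/
open Finset
open scoped Classical

variable {V : Type*}

/-- Degree of a vertex: number of edges containing it. -/
noncomputable def degree (E : Finset (Finset V)) (v : V) : ℕ :=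
  (E.filter (fun e => v ∈ e)).card

/-- `E` is `k`-uniform. -/
def Uniform (E : Finset (Finset V)) (k : ℕ) : Prop := ∀ e ∈ E, e.card = k

/-- `E` is linear: two distinct edges share at most one vertex. -/
noncomputable def Linear (E : Finset (Finset V)) : Prop :=
  ∀ e ∈ E, ∀ f ∈ E, e ≠ f → (e ∩ f).card ≤ 1

/-- The set of matchings of `E`: subsets of pairwise disjoint edges. -/
noncomputable def matchings (E : Finset (Finset V)) : Finset (Finset (Finset V)) :=
  E.powerset.filter (fun M => ∀ e ∈ M, ∀ f ∈ M, e ≠ f → Disjoint e f)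

/-- Probability that a uniformly random matching of `E` leaves `v` uncovered. -/
noncomputable def uncovProb (E : Finset (Finset V)) (v : V) : ℝ :=
  (((matchings E).filter (fun M => ∀ e ∈ M, v ∉ e)).card : ℝ) / ((matchings E).card : ℝ)


section Helpers

lemma mem_matchings_iff {E M : Finset (Finset V)} :
    M ∈ matchings E ↔ M ⊆ E ∧ ∀ e ∈ M, ∀ f ∈ M, e ≠ f → Disjoint e f := by
  simp [matchings]

lemma empty_mem_matchings (E : Finset (Finset V)) : ∅ ∈ matchings E := by
  simp [matchings]

lemma matchings_card_pos (E : Finset (Finset V)) : 0 < (matchings E).card :=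
  Finset.card_pos.mpr ⟨∅, empty_mem_matchings E⟩

lemma filter_matchings_eq (E : Finset (Finset V)) (w : V) :
    (matchings E).filter (fun M => ∀ e ∈ M, w ∉ e)
      = matchings (E.filter (fun f => w ∉ f)) := by
  ext M
  simp only [matchings, Finset.mem_filter, Finset.mem_powerset]
  constructor
  · rintro ⟨⟨hsub, hdisj⟩, havoid⟩
    exact ⟨fun f hf => Finset.mem_filter.mpr ⟨hsub hf, havoid f hf⟩, hdisj⟩
  · rintro ⟨hsub, hdisj⟩
    exact ⟨⟨fun f hf => (Finset.mem_filter.mp (hsub hf)).1, hdisj⟩,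
      fun f hf => (Finset.mem_filter.mp (hsub hf)).2⟩

lemma uncovProb_eq (E : Finset (Finset V)) (w : V) :
    uncovProb E w
      = ((matchings (E.filter (fun f => w ∉ f))).card : ℝ) / ((matchings E).card : ℝ) := by
  rw [uncovProb, filter_matchings_eq]

/-- Telescoping product. -/
lemma prod_div_telescope (c : ℕ → ℝ) (hc : ∀ n, c n ≠ 0) (n : ℕ) :
    ∏ j ∈ Finset.range n, c (j + 1) / c j = c n / c 0 := by
  induction n with
  | zero => simp [div_self (hc 0)]
  | succ n ih =>
      rw [Finset.prod_range_succ, ih, div_mul_div_comm, mul_comm (c n),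
        mul_div_mul_right _ _ (hc n)]

lemma telescope_general (g : ℕ → ℝ) (hg : ∀ n, g n ≠ 0) (n : ℕ) (t : Fin n → ℝ)
    (ht : ∀ j, t j = g ((j : ℕ) + 1) / g (j : ℕ)) :
    ∏ j : Fin n, t j = g n / g 0 := by
  calc ∏ j : Fin n, t j
      = ∏ j : Fin n, g ((j : ℕ) + 1) / g (j : ℕ) := Finset.prod_congr rfl (fun j _ => ht j)
    _ = ∏ j ∈ Finset.range n, g (j + 1) / g j :=
        Fin.prod_univ_eq_prod_range (fun a => g (a + 1) / g a) n
    _ = g n / g 0 := prod_div_telescope g hg n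

/-- Matchings containing a fixed nonempty edge `e0` correspond to matchings of the
hypergraph obtained by deleting all vertices of `e0`. -/
lemma card_matchings_containing (E : Finset (Finset V)) (e0 : Finset V)
    (he0 : e0 ∈ E) (hne : e0.Nonempty) :
    ((matchings E).filter (fun M => e0 ∈ M)).card
      = (matchings (E.filter (fun f => ∀ x ∈ e0, x ∉ f))).card := by
  obtain ⟨x0, hx0⟩ := hne
  refine Finset.card_bij' (fun M _ => M.erase e0) (fun M _ => insert e0 M) ?_ ?_ ?_ ?_
  · rintro M hM
    rw [Finset.mem_filter, mem_matchings_iff] at hM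
    obtain ⟨⟨hsub, hdisj⟩, hmem⟩ := hM
    rw [mem_matchings_iff]
    constructor
    · intro f hf
      have hfM := Finset.mem_of_mem_erase hf
      have hfne := Finset.ne_of_mem_erase hf
      refine Finset.mem_filter.mpr ⟨hsub hfM, ?_⟩
      intro x hx hxf
      exact Finset.disjoint_left.mp (hdisj f hfM e0 hmem hfne) hxf hx
    · intro a ha b hb hab
      exact hdisj a (Finset.mem_of_mem_erase ha) b (Finset.mem_of_mem_erase hb) hab
  · rintro M hM
    rw [mem_matchings_iff] at hM
    obtain ⟨hsub, hdisj⟩ := hM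
    have he0M : e0 ∉ M := by
      intro h
      have := (Finset.mem_filter.mp (hsub h)).2
      exact this x0 hx0 hx0
    refine Finset.mem_filter.mpr ⟨?_, Finset.mem_insert_self _ _⟩
    rw [mem_matchings_iff]
    constructor
    · intro f hf
      rcases Finset.mem_insert.mp hf with h | h
      · exact h ▸ he0
      · exact (Finset.mem_filter.mp (hsub h)).1
    · intro a ha b hb hab
      rcases Finset.mem_insert.mp ha with ha' | ha' <;>
        rcases Finset.mem_insert.mp hb with hb' | hb'
      · exact absurd (ha'.trans hb'.symm) hab
      · subst ha'
        exact Finset.disjoint_left.mpr fun x hx hxb =>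
          (Finset.mem_filter.mp (hsub hb')).2 x hx hxb
      · subst hb'
        exact Finset.disjoint_right.mpr fun x hx hxa =>
          (Finset.mem_filter.mp (hsub ha')).2 x hx hxa
      · exact hdisj a ha' b hb' hab
  · rintro M hM
    exact Finset.insert_erase (Finset.mem_filter.mp hM).2
  · rintro M hM
    rw [mem_matchings_iff] at hM
    have he0M : e0 ∉ M := by
      intro h
      have := (Finset.mem_filter.mp (hM.1 h)).2
      exact this x0 hx0 hx0
    exact Finset.erase_insert he0M

end Helpers

/-- Recursive formula: if `e_1, …, e_m` are the edges through `v`, with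
`e_i = {v, u_{i,1}, …, u_{i,k-1}}`, then
`P_H(v̄) = (1 + ∑_i ∏_j P_{H - {v, u_{i,1}, …, u_{i,j-1}}}(ū_{i,j}))⁻¹`. -/
theorem recursive_formula (V : Type) (k m : ℕ) (E : Finset (Finset V)) (v : V)
    (e : Fin m → Finset V) (he : ∀ i, e i ∈ E) (hinj : Function.Injective e)
    (hall : ∀ f ∈ E, (v ∈ f ↔ ∃ i, f = e i))
    (u : Fin m → Fin (k - 1) → V)
    (huinj : ∀ i, Function.Injective (u i))
    (hvu : ∀ i j, u i j ≠ v)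
    (hedge : ∀ i, e i = insert v (Finset.image (u i) Finset.univ)) :
    uncovProb E v =
      (1 + ∑ i : Fin m, ∏ j : Fin (k - 1),
        uncovProb
          (E.filter (fun f => ∀ x ∈ insert v
            ((Finset.univ.filter (fun l : Fin (k - 1) => (l : ℕ) < (j : ℕ))).image (u i)),
            x ∉ f))
          (u i j))⁻¹ := by
  classical
  -- Abbreviations
  set A : ℕ := ((matchings E).filter (fun M => ∀ f ∈ M, v ∉ f)).card with hA
  set B : Fin m → ℕ := fun i => ((matchings E).filter (fun M => e i ∈ M)).card with hB
  have hvei : ∀ i, v ∈ e i := by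
    intro i; rw [hedge i]; exact Finset.mem_insert_self _ _
  -- Partition of matchings
  have hsplit : (matchings E).card = A + ∑ i : Fin m, B i := by
    have h1 : (matchings E).card =
        A + ((matchings E).filter (fun M => ¬ ∀ f ∈ M, v ∉ f)).card :=
      (Finset.card_filter_add_card_filter_not _).symm
    have h2 : (matchings E).filter (fun M => ¬ ∀ f ∈ M, v ∉ f)
        = Finset.univ.biUnion (fun i : Fin m => (matchings E).filter (fun M => e i ∈ M)) := by
      ext M
      simp only [Finset.mem_filter, Finset.mem_biUnion, Finset.mem_univ, true_and,
        not_forall, exists_prop, not_not]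
      constructor
      · rintro ⟨hM, f, hfM, hvf⟩
        have hfE : f ∈ E := (mem_matchings_iff.mp hM).1 hfM
        obtain ⟨i, rfl⟩ := (hall f hfE).mp hvf
        exact ⟨i, hM, hfM⟩
      · rintro ⟨i, hM, hei⟩
        exact ⟨hM, e i, hei, hvei i⟩
    have h3 : ((matchings E).filter (fun M => ¬ ∀ f ∈ M, v ∉ f)).card
        = ∑ i : Fin m, B i := by
      rw [h2]
      rw [Finset.card_biUnion]
      intro i _ j _ hij
      refine Finset.disjoint_left.mpr ?_
      intro M hMi hMj
      have hMi' := Finset.mem_filter.mp hMi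
      have hMj' := Finset.mem_filter.mp hMj
      have hne : e i ≠ e j := fun h => hij (hinj h)
      have hd := (mem_matchings_iff.mp hMi'.1).2 (e i) hMi'.2 (e j) hMj'.2 hne
      exact Finset.disjoint_left.mp hd (hvei i) (hvei j)
    omega
  have hA_pos : 0 < A := by
    refine Finset.card_pos.mpr ⟨∅, ?_⟩
    exact Finset.mem_filter.mpr ⟨empty_mem_matchings E, by simp⟩
  have hA_ne : (A : ℝ) ≠ 0 := Nat.cast_ne_zero.mpr hA_pos.ne'
  -- the value of each product
  have hprod : ∀ i : Fin m, (∏ j : Fin (k - 1),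
      uncovProb
        (E.filter (fun f => ∀ x ∈ insert v
          ((Finset.univ.filter (fun l : Fin (k - 1) => (l : ℕ) < (j : ℕ))).image (u i)),
          x ∉ f))
        (u i j)) = (B i : ℝ) / (A : ℝ) := by
    intro i
    have hc : ∀ n : ℕ, (0 : ℝ) <
        ((matchings (E.filter (fun f => ∀ x ∈ insert v
          ((Finset.univ.filter (fun l : Fin (k - 1) => (l : ℕ) < n)).image (u i)),
          x ∉ f))).card : ℝ) := fun n => Nat.cast_pos.mpr (matchings_card_pos _)
    have hterm : ∀ j : Fin (k - 1),
        uncovProb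
          (E.filter (fun f => ∀ x ∈ insert v
            ((Finset.univ.filter (fun l : Fin (k - 1) => (l : ℕ) < (j : ℕ))).image (u i)),
            x ∉ f))
          (u i j)
        = ((matchings (E.filter (fun f => ∀ x ∈ insert v
            ((Finset.univ.filter (fun l : Fin (k - 1) => (l : ℕ) < (j : ℕ) + 1)).image (u i)),
            x ∉ f))).card : ℝ)
          / ((matchings (E.filter (fun f => ∀ x ∈ insert v
            ((Finset.univ.filter (fun l : Fin (k - 1) => (l : ℕ) < (j : ℕ))).image (u i)),
            x ∉ f))).card : ℝ) := by
      intro j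
      rw [uncovProb_eq]
      have hset : insert (u i j) (insert v
            ((Finset.univ.filter (fun l : Fin (k - 1) => (l : ℕ) < (j : ℕ))).image (u i)))
          = insert v
            ((Finset.univ.filter (fun l : Fin (k - 1) => (l : ℕ) < (j : ℕ) + 1)).image (u i)) := by
        have hf : (Finset.univ.filter (fun l : Fin (k - 1) => (l : ℕ) < (j : ℕ) + 1))
            = insert j (Finset.univ.filter (fun l : Fin (k - 1) => (l : ℕ) < (j : ℕ))) := by
          ext l
          simp [Nat.lt_succ_iff_lt_or_eq, Fin.ext_iff, or_comm]
          rw [Fin.le_iff_val_le_val, Fin.lt_iff_val_lt_val]; omega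
        rw [hf, Finset.image_insert, Finset.insert_comm]
      have hflt : (E.filter (fun f => ∀ x ∈ insert v
            ((Finset.univ.filter (fun l : Fin (k - 1) => (l : ℕ) < (j : ℕ))).image (u i)),
            x ∉ f)).filter (fun f => u i j ∉ f)
          = E.filter (fun f => ∀ x ∈ insert v
            ((Finset.univ.filter (fun l : Fin (k - 1) => (l : ℕ) < (j : ℕ) + 1)).image (u i)),
            x ∉ f) := by
        rw [Finset.filter_filter]
        ext f
        simp only [Finset.mem_filter, ← hset, Finset.forall_mem_insert]
        tauto
      rw [hflt]
    have hB_eq : (B i : ℝ)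
        = ((matchings (E.filter (fun f => ∀ x ∈ insert v
            ((Finset.univ.filter (fun l : Fin (k - 1) => (l : ℕ) < (k - 1 : ℕ))).image (u i)),
            x ∉ f))).card : ℝ) := by
      have hfull : (Finset.univ.filter (fun l : Fin (k - 1) => (l : ℕ) < (k - 1 : ℕ)))
          = Finset.univ := Finset.filter_true_of_mem (fun l _ => l.isLt)
      rw [hfull]
      simp only [hB]
      norm_cast
      rw [card_matchings_containing E (e i) (he i) ⟨v, hvei i⟩]
      congr 2
      ext f
      simp only [Finset.mem_filter]
      rw [hedge i]
    have hA_eq : (A : ℝ)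
        = ((matchings (E.filter (fun f => ∀ x ∈ insert v
            ((Finset.univ.filter (fun l : Fin (k - 1) => (l : ℕ) < (0 : ℕ))).image (u i)),
            x ∉ f))).card : ℝ) := by
      have h0 : (Finset.univ.filter (fun l : Fin (k - 1) => (l : ℕ) < (0 : ℕ)))
          = (∅ : Finset (Fin (k - 1))) :=
        Finset.filter_false_of_mem (fun l _ => Nat.not_lt_zero _)
      rw [h0, hA]
      norm_cast
      rw [filter_matchings_eq E v]
      congr 2
      ext f
      simp
    have hT := telescope_general (fun n : ℕ =>
      ((matchings (E.filter (fun f => ∀ x ∈ insert v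
        ((Finset.univ.filter (fun l : Fin (k - 1) => (l : ℕ) < n)).image (u i)),
        x ∉ f))).card : ℝ)) (fun n => (hc n).ne') (k - 1)
      _ (fun j => hterm j)
    rw [hT, hB_eq, hA_eq]
  -- final arithmetic
  rw [uncovProb]
  have hsum : (1 : ℝ) + ∑ i : Fin m, (B i : ℝ) / (A : ℝ)
      = ((matchings E).card : ℝ) / (A : ℝ) := by
    rw [← Finset.sum_div, hsplit]
    push_cast
    field_simp
  calc (((matchings E).filter (fun M => ∀ f ∈ M, v ∉ f)).card : ℝ)
        / ((matchings E).card : ℝ)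
      = (A : ℝ) / ((matchings E).card : ℝ) := by rw [hA]
    _ = (1 + ∑ i : Fin m, (B i : ℝ) / (A : ℝ))⁻¹ := by
        rw [hsum, inv_div]
    _ = _ := by
        congr 1
        congr 1
        exact Finset.sum_congr rfl (fun i _ => (hprod i).symm)
end

section
/- Let k > 2 be an integer and ε > 0. There exists d₀ such that for all d ≥ d₀, every d-regular linear k-uniform hypergraph H, and every vertex v of H: 1/(d+1) ≤ P_H(v̄) < 1 − (1−ε)/d^{k−2}, where P_H(v̄) is the probability that a uniformly random matching of H leaves v uncovered. -/
open Finset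
open scoped Classical

variable {V : Type*}

lemma mem_matchings {E : Finset (Finset V)} {M : Finset (Finset V)} :
    M ∈ matchings E ↔ M ⊆ E ∧ ∀ e ∈ M, ∀ f ∈ M, e ≠ f → Disjoint e f := by
  simp [matchings, mem_filter, mem_powerset]

lemma matching_unique {M : Finset (Finset V)} (hM : ∀ e ∈ M, ∀ f ∈ M, e ≠ f → Disjoint e f)
    {e f : Finset V} (he : e ∈ M) (hf : f ∈ M) {u : V} (hue : u ∈ e) (huf : u ∈ f) : e = f := by
  by_contra h
  exact Finset.disjoint_left.mp (hM e he f hf h) hue huf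

lemma empty_mem_avoid (E : Finset (Finset V)) (v : V) :
    ∅ ∈ (matchings E).filter (fun M => ∀ e ∈ M, v ∉ e) := by
  simp [mem_matchings]

lemma cover_card_le {E : Finset (Finset V)} {v : V} {d : ℕ} (hd : degree E v = d) :
    ((matchings E).filter (fun M => ¬ ∀ e ∈ M, v ∉ e)).card ≤
      d * ((matchings E).filter (fun M => ∀ e ∈ M, v ∉ e)).card := by
  classical
  set A := (matchings E).filter (fun M => ∀ e ∈ M, v ∉ e) with hA
  set C := (matchings E).filter (fun M => ¬ ∀ e ∈ M, v ∉ e) with hC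
  set T : Finset (Finset (Finset V)) := (E.filter (fun e => v ∈ e)).image (fun e => ({e} : Finset (Finset V))) with hT
  have hcard : C.card ≤ (A ×ˢ T).card := by
    apply Finset.card_le_card_of_injOn
      (fun M => (M.filter (fun e => v ∉ e), M.filter (fun e => v ∈ e)))
    · intro M hM
      rw [hC, Finset.mem_coe, mem_filter, mem_matchings] at hM
      obtain ⟨⟨hME, hMd⟩, hcov⟩ := hM
      push_neg at hcov
      obtain ⟨e, heM, hve⟩ := hcov
      rw [Finset.mem_coe, mem_product]
      constructor
      · rw [hA, mem_filter, mem_matchings]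
        refine ⟨⟨fun f hf => hME (mem_filter.mp hf).1,
          fun f hf g hg hfg => hMd f (mem_filter.mp hf).1 g (mem_filter.mp hg).1 hfg⟩, ?_⟩
        intro f hf
        exact (mem_filter.mp hf).2
      · have : M.filter (fun e => v ∈ e) = {e} := by
          apply Finset.eq_singleton_iff_unique_mem.mpr
          refine ⟨mem_filter.mpr ⟨heM, hve⟩, fun f hf => ?_⟩
          have hf' := mem_filter.mp hf
          exact matching_unique hMd hf'.1 heM hf'.2 hve
        show M.filter (fun e => v ∈ e) ∈ T
        rw [this, hT, mem_image]
        exact ⟨e, mem_filter.mpr ⟨hME heM, hve⟩, rfl⟩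
    · intro M₁ h₁ M₂ h₂ heq
      simp only [Prod.mk.injEq] at heq
      ext f
      constructor
      · intro hf
        by_cases hv : v ∈ f
        · have : f ∈ M₁.filter (fun e => v ∈ e) := mem_filter.mpr ⟨hf, hv⟩
          rw [heq.2] at this; exact (mem_filter.mp this).1
        · have : f ∈ M₁.filter (fun e => v ∉ e) := mem_filter.mpr ⟨hf, hv⟩
          rw [heq.1] at this; exact (mem_filter.mp this).1
      · intro hf
        by_cases hv : v ∈ f
        · have : f ∈ M₂.filter (fun e => v ∈ e) := mem_filter.mpr ⟨hf, hv⟩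
          rw [← heq.2] at this; exact (mem_filter.mp this).1
        · have : f ∈ M₂.filter (fun e => v ∉ e) := mem_filter.mpr ⟨hf, hv⟩
          rw [← heq.1] at this; exact (mem_filter.mp this).1
  rw [Finset.card_product, hT, Finset.card_image_of_injective _ (Finset.singleton_injective)] at hcard
  rw [degree] at hd
  rw [hd, mul_comm] at hcard
  exact hcard

lemma key_count {E : Finset (Finset V)} {v : V} {d k : ℕ}
    (hu : Uniform E k) (hreg : ∀ w, degree E w = d) :
    d * ((matchings E).filter (fun M => ∀ e ∈ M, v ∉ e)).card ≤
      (d + 1) ^ (k - 1) * ((matchings E).filter (fun M => ¬ ∀ e ∈ M, v ∉ e)).card := by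
  classical
  set A := (matchings E).filter (fun M => ∀ e ∈ M, v ∉ e) with hA
  set C := (matchings E).filter (fun M => ¬ ∀ e ∈ M, v ∉ e) with hC
  set Ev := E.filter (fun e => v ∈ e) with hEv
  set s := A ×ˢ Ev with hs
  set Φ : Finset (Finset V) × Finset V → Finset (Finset V) :=
    fun p => insert p.2 (p.1.filter (fun f => Disjoint f p.2)) with hΦ
  -- facts about elements of s
  have hsfact : ∀ p ∈ s, (p.1 ⊆ E ∧ (∀ e ∈ p.1, ∀ f ∈ p.1, e ≠ f → Disjoint e f) ∧
      (∀ e ∈ p.1, v ∉ e)) ∧ p.2 ∈ E ∧ v ∈ p.2 := by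
    intro p hp
    rw [hs, mem_product] at hp
    obtain ⟨hp1, hp2⟩ := hp
    rw [hA, mem_filter, mem_matchings] at hp1
    rw [hEv, mem_filter] at hp2
    exact ⟨⟨hp1.1.1, hp1.1.2, hp1.2⟩, hp2⟩
  have hmem : ∀ p ∈ s, Φ p ∈ C := by
    intro p hp
    obtain ⟨⟨hpE, hpm, hpv⟩, heE, hev⟩ := hsfact p hp
    rw [hC, mem_filter, mem_matchings]
    refine ⟨⟨?_, ?_⟩, ?_⟩
    · intro f hf
      rcases mem_insert.mp hf with rfl | hf
      · exact heE
      · exact hpE (mem_filter.mp hf).1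
    · intro f hf g hg hfg
      rcases mem_insert.mp hf with rfl | hf'
      · rcases mem_insert.mp hg with rfl | hg'
        · exact absurd rfl hfg
        · exact ((mem_filter.mp hg').2).symm
      · rcases mem_insert.mp hg with rfl | hg'
        · exact (mem_filter.mp hf').2
        · exact hpm f (mem_filter.mp hf').1 g (mem_filter.mp hg').1 hfg
    · push_neg
      exact ⟨p.2, mem_insert_self _ _, hev⟩
  have himage : s.image Φ ⊆ C := by
    intro M' hM'
    obtain ⟨p, hp, rfl⟩ := mem_image.mp hM'
    exact hmem p hp
  -- fiber bound
  have hfiber : ∀ M' ∈ s.image Φ, (s.filter (fun p => Φ p = M')).card ≤ (d + 1) ^ (k - 1) := by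
    intro M' hM'
    obtain ⟨p₀, hp₀, hΦ0⟩ := mem_image.mp hM'
    have hM'C := himage hM'
    have hM'm : ∀ e ∈ M', ∀ f ∈ M', e ≠ f → Disjoint e f := by
      rw [hC, mem_filter, mem_matchings] at hM'C
      exact hM'C.1.2
    set e₀ := p₀.2 with he₀
    have he₀E : e₀ ∈ E := (hsfact p₀ hp₀).2.1
    have he₀v : v ∈ e₀ := (hsfact p₀ hp₀).2.2
    have he₀M' : e₀ ∈ M' := by rw [← hΦ0]; exact mem_insert_self _ _
    -- every pair in the fiber has second component e₀
    have hsnd : ∀ p ∈ s.filter (fun p => Φ p = M'), p.2 = e₀ := by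
      intro p hp
      rw [mem_filter] at hp
      have h1 : p.2 ∈ M' := by rw [← hp.2]; exact mem_insert_self _ _
      exact matching_unique hM'm h1 he₀M' (hsfact p hp.1).2.2 he₀v
    -- the injection into functions on e₀ \ {v}
    set t : ∀ _ : V, Finset (Option (Finset V)) :=
      fun u => insert none ((E.filter (fun f => u ∈ f)).image some) with ht
    set σ : Finset (Finset V) × Finset V → ((a : V) → a ∈ e₀.erase v → Option (Finset V)) :=
      fun p => fun u _ =>
        if h : (p.1.filter (fun f => u ∈ f)).Nonempty then some h.choose else none with hσ
    -- basic facts about σ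
    have hσ_some : ∀ (p : Finset (Finset V) × Finset V) (u : V) (hu : u ∈ e₀.erase v)
        (f : Finset V), σ p u hu = some f → f ∈ p.1 ∧ u ∈ f := by
      intro p u hu f h
      rw [hσ] at h
      simp only at h
      split_ifs at h with hne
      · have := hne.choose_spec
        rw [Option.some.injEq] at h
        rw [← h]
        exact ⟨(mem_filter.mp this).1, (mem_filter.mp this).2⟩
    have hσ_eq : ∀ (p : Finset (Finset V) × Finset V), p ∈ s → ∀ (u : V) (hu : u ∈ e₀.erase v)
        (f : Finset V), f ∈ p.1 → u ∈ f → σ p u hu = some f := by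
      intro p hp u hu f hf huf
      have hne : (p.1.filter (fun g => u ∈ g)).Nonempty := ⟨f, mem_filter.mpr ⟨hf, huf⟩⟩
      rw [hσ]
      simp only [dif_pos hne]
      congr 1
      have hspec := hne.choose_spec
      exact matching_unique (hsfact p hp).1.2.1 (mem_filter.mp hspec).1 hf (mem_filter.mp hspec).2 huf
    have hinj : (s.filter (fun p => Φ p = M')).card ≤ ((e₀.erase v).pi t).card := by
      apply Finset.card_le_card_of_injOn σ
      · intro p hp
        rw [Finset.mem_coe, Finset.mem_pi]
        intro u hu
        rw [hσ]
        simp only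
        split_ifs with hne
        · have hspec := hne.choose_spec
          rw [ht]
          apply mem_insert_of_mem
          rw [mem_image]
          refine ⟨hne.choose, ?_, rfl⟩
          rw [Finset.mem_coe, mem_filter] at hp
          rw [mem_filter]
          exact ⟨(hsfact p hp.1).1.1 (mem_filter.mp hspec).1, (mem_filter.mp hspec).2⟩
        · rw [ht]; exact mem_insert_self _ _
      · -- injectivity
        intro p hp q hq hpq
        simp only [Finset.coe_filter, Set.mem_setOf_eq] at hp hq
        have hps : p ∈ s := hp.1
        have hqs : q ∈ s := hq.1
        have hp2 : p.2 = e₀ := hsnd p (mem_filter.mpr hp)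
        have hq2 : q.2 = e₀ := hsnd q (mem_filter.mpr hq)
        -- one-directional lemma
        have hdir : ∀ (a b : Finset (Finset V) × Finset V), a ∈ s → b ∈ s →
            Φ a = M' → Φ b = M' → a.2 = e₀ → b.2 = e₀ → σ a = σ b →
            ∀ f ∈ a.1, f ∈ b.1 := by
          intro a b has hbs hΦa hΦb ha2 hb2 hab f hf
          by_cases hdisj : Disjoint f e₀
          · have h1 : f ∈ Φ a := by
              rw [hΦ]
              apply mem_insert_of_mem
              rw [mem_filter, ha2]
              exact ⟨hf, hdisj⟩
            rw [hΦa, ← hΦb] at h1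
            simp only [hΦ] at h1
            rcases mem_insert.mp h1 with h2 | h2
            · exfalso
              exact (hsfact a has).1.2.2 f hf (by rw [h2, hb2]; exact he₀v)
            · exact (mem_filter.mp h2).1
          · obtain ⟨u, huf, hue₀⟩ := Finset.not_disjoint_iff.mp hdisj
            have huv : u ≠ v := fun h => (hsfact a has).1.2.2 f hf (h ▸ huf)
            have hu : u ∈ e₀.erase v := mem_erase.mpr ⟨huv, hue₀⟩
            have h1 : σ a u hu = some f := hσ_eq a has u hu f hf huf
            have h2 : σ b u hu = some f := by rw [← hab]; exact h1
            exact (hσ_some b u hu f h2).1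
        have h12 : p.1 = q.1 := by
          apply Finset.Subset.antisymm
          · intro f hf; exact hdir p q hps hqs hp.2 hq.2 hp2 hq2 hpq f hf
          · intro f hf; exact hdir q p hqs hps hq.2 hp.2 hq2 hp2 hpq.symm f hf
        exact Prod.ext h12 (hp2.trans hq2.symm)
    -- card of the pi set
    have hpicard : ((e₀.erase v).pi t).card ≤ (d + 1) ^ (k - 1) := by
      rw [Finset.card_pi]
      have hbound : ∀ u ∈ e₀.erase v, (t u).card ≤ d + 1 := by
        intro u _
        rw [ht]
        calc (insert none ((E.filter (fun f => u ∈ f)).image some)).card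
            ≤ ((E.filter (fun f => u ∈ f)).image some).card + 1 := Finset.card_insert_le _ _
          _ ≤ (E.filter (fun f => u ∈ f)).card + 1 := by
              exact Nat.add_le_add_right (Finset.card_image_le) 1
          _ = d + 1 := by rw [← degree, hreg u]
      calc ∏ u ∈ e₀.erase v, (t u).card ≤ (d + 1) ^ (e₀.erase v).card :=
            Finset.prod_le_pow_card _ _ _ hbound
        _ = (d + 1) ^ (k - 1) := by
            rw [Finset.card_erase_of_mem he₀v, hu e₀ he₀E]
    exact hinj.trans hpicard
  have hmain := Finset.card_le_mul_card_image s ((d + 1) ^ (k - 1)) hfiber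
  have hscard : s.card = A.card * d := by
    rw [hs, Finset.card_product, hEv, ← degree, hreg v]
  have himcard : (s.image Φ).card ≤ C.card := Finset.card_le_card himage
  calc d * A.card = s.card := by rw [hscard, mul_comm]
    _ ≤ (d + 1) ^ (k - 1) * (s.image Φ).card := hmain
    _ ≤ (d + 1) ^ (k - 1) * C.card := Nat.mul_le_mul_left _ himcard

lemma aux_ineq (k : ℕ) (hk : 2 < k) (ε : ℝ) (hε : 0 < ε) (d : ℕ)
    (hd : ⌈2 * (k : ℝ) / ε⌉₊ + 1 ≤ d) :
    (1 - ε) * (((d : ℝ) + 1) ^ (k - 1) + d) < (d : ℝ) ^ (k - 1) := by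
  have hd1 : (1 : ℝ) ≤ d := by exact_mod_cast Nat.one_le_iff_ne_zero.mpr (by omega)
  have hd2 : (0 : ℝ) < (d : ℝ) + 2 := by linarith
  by_cases hε1 : 1 - ε ≤ 0
  · have h1 : (0:ℝ) < ((d:ℝ)+1)^(k-1) + d := by positivity
    have h2 : (0:ℝ) < (d:ℝ)^(k-1) := by positivity
    nlinarith [mul_nonpos_of_nonpos_of_nonneg hε1 h1.le]
  · push_neg at hε1
    -- step 1 : (d+1)^(k-1) + d ≤ (d+2)^(k-1)
    have hk2 : k - 1 = (k - 2) + 1 := by omega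
    have hstep : ((d : ℝ) + 1) ^ (k - 1) + d ≤ ((d : ℝ) + 2) ^ (k - 1) := by
      rw [hk2, pow_succ, pow_succ]
      have hbase : ((d:ℝ)+1)^(k-2) ≤ ((d:ℝ)+2)^(k-2) :=
        pow_le_pow_left₀ (by linarith) (by linarith) _
      have hge : (d : ℝ) ≤ ((d:ℝ)+1)^(k-2) := by
        calc (d:ℝ) ≤ (d:ℝ)+1 := by linarith
          _ = ((d:ℝ)+1)^1 := (pow_one _).symm
          _ ≤ ((d:ℝ)+1)^(k-2) := pow_le_pow_right₀ (by linarith) (by omega)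
      nlinarith [pow_nonneg (by linarith : (0:ℝ) ≤ (d:ℝ)+1) (k-2)]
    -- step 2 : Bernoulli
    have hceil : 2 * (k : ℝ) / ε ≤ d := by
      calc 2 * (k : ℝ) / ε ≤ (⌈2 * (k : ℝ) / ε⌉₊ : ℝ) := Nat.le_ceil _
        _ ≤ d := by exact_mod_cast Nat.le_of_succ_le hd
    have hkd : 2 * ((k:ℝ) - 1) < ε * ((d:ℝ) + 2) := by
      have h2k : 2 * (k:ℝ) ≤ ε * d := by
        rw [div_le_iff₀ hε] at hceil; linarith
      linarith
    have hbern : 1 - ε < ((d:ℝ)/((d:ℝ)+2))^(k-1) := by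
      have hB := one_add_mul_le_pow (a := -(2/((d:ℝ)+2))) (by
        have : 2/((d:ℝ)+2) ≤ 2 := by
          rw [div_le_iff₀ hd2]; linarith
        linarith) (k-1)
      have heq : 1 + -(2/((d:ℝ)+2)) = (d:ℝ)/((d:ℝ)+2) := by
        field_simp; ring
      rw [heq] at hB
      have hkcast : ((k - 1 : ℕ) : ℝ) = (k : ℝ) - 1 := by
        have : (1:ℕ) ≤ k := by omega
        push_cast [Nat.cast_sub this]; ring
      calc 1 - ε < 1 - 2*((k:ℝ)-1)/((d:ℝ)+2) := by
            rw [sub_lt_sub_iff_left, div_lt_iff₀ hd2]; linarith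
        _ = 1 + ((k - 1 : ℕ) : ℝ) * (-(2/((d:ℝ)+2))) := by
            rw [hkcast]; field_simp; ring
        _ ≤ _ := hB
    have hdp : (0:ℝ) < ((d:ℝ)+2)^(k-1) := by positivity
    have hmain : (1 - ε) * ((d:ℝ)+2)^(k-1) < (d:ℝ)^(k-1) := by
      rw [div_pow] at hbern
      rw [lt_div_iff₀ hdp] at hbern
      linarith
    calc (1 - ε) * (((d : ℝ) + 1) ^ (k - 1) + d)
        ≤ (1 - ε) * ((d:ℝ)+2)^(k-1) := by
          apply mul_le_mul_of_nonneg_left hstep (by linarith)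
      _ < (d:ℝ)^(k-1) := hmain



/-- For `k > 2` and `ε > 0`, for all sufficiently large `d`, every vertex `v` of a
`d`-regular linear `k`-uniform hypergraph satisfies
`1/(d+1) ≤ P_H(v̄) < 1 - (1-ε)/d^(k-2)`. -/
theorem uncovProb_sharp_range (k : ℕ) (hk : 2 < k) (ε : ℝ) (hε : 0 < ε) :
    ∃ d₀ : ℕ, ∀ d : ℕ, d₀ ≤ d →
      ∀ (V : Type) [Finite V], ∀ E : Finset (Finset V),
        Uniform E k → Linear E → (∀ w : V, degree E w = d) →
        ∀ v : V,
          1 / ((d : ℝ) + 1) ≤ uncovProb E v ∧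
          uncovProb E v < 1 - (1 - ε) / (d : ℝ) ^ (k - 2) := by
  refine ⟨⌈2 * (k : ℝ) / ε⌉₊ + 1, ?_⟩
  intro d hd V _ E huni hlin hreg v
  have hd1 : 1 ≤ d := by omega
  set A := (matchings E).filter (fun M => ∀ e ∈ M, v ∉ e) with hA
  set C := (matchings E).filter (fun M => ¬ ∀ e ∈ M, v ∉ e) with hC
  have hAC : A.card + C.card = (matchings E).card :=
    Finset.card_filter_add_card_filter_not _
  have hA1 : 1 ≤ A.card := Finset.card_pos.mpr ⟨∅, empty_mem_avoid E v⟩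
  have h1 : C.card ≤ d * A.card := cover_card_le (hreg v)
  have h2 : d * A.card ≤ (d + 1) ^ (k - 1) * C.card := key_count huni hreg
  have hup : uncovProb E v = (A.card : ℝ) / ((A.card : ℝ) + (C.card : ℝ)) := by
    rw [uncovProb, ← hAC]
    push_cast
    rfl
  set a : ℝ := (A.card : ℝ) with ha
  set c : ℝ := (C.card : ℝ) with hc
  have haR : 1 ≤ a := by rw [ha]; exact_mod_cast hA1
  have hcR : 0 ≤ c := by positivity
  have hdR : (1 : ℝ) ≤ d := by exact_mod_cast hd1
  have hT : (0 : ℝ) < a + c := by linarith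
  have h1R : c ≤ (d : ℝ) * a := by rw [ha, hc]; exact_mod_cast h1
  have h2R : (d : ℝ) * a ≤ ((d : ℝ) + 1) ^ (k - 1) * c := by
    have := h2
    have h2' : ((d * A.card : ℕ) : ℝ) ≤ (((d + 1) ^ (k - 1) * C.card : ℕ) : ℝ) := by
      exact_mod_cast this
    push_cast at h2'
    exact h2'
  have hC1 : (1 : ℝ) ≤ c := by
    by_contra hcon
    push_neg at hcon
    have hc0 : C.card = 0 := by
      by_contra h0
      have : (1 : ℝ) ≤ c := by
        rw [hc]; exact_mod_cast Nat.one_le_iff_ne_zero.mpr h0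
      linarith
    have : c = 0 := by rw [hc, hc0]; norm_num
    rw [this] at h2R
    have hp : (0 : ℝ) < (d : ℝ) * a := by nlinarith
    simp at h2R
    linarith
  constructor
  · rw [hup, div_le_div_iff₀ (by linarith) hT]
    have hexp : a * ((d : ℝ) + 1) = (d : ℝ) * a + a := by ring
    linarith
  · rw [hup]
    have hpow : (0 : ℝ) < (d : ℝ) ^ (k - 2) := by positivity
    have hsuff : (1 - ε) / (d : ℝ) ^ (k - 2) < c / (a + c) := by
      rw [div_lt_div_iff₀ hpow hT]
      by_cases hε1 : 1 - ε ≤ 0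
      · have hL : (1 - ε) * (a + c) ≤ 0 := mul_nonpos_of_nonpos_of_nonneg hε1 hT.le
        have hR : (0 : ℝ) < c * (d : ℝ) ^ (k - 2) := mul_pos (by linarith) hpow
        linarith
      · push_neg at hε1
        have hkey : (1 - ε) * (((d : ℝ) + 1) ^ (k - 1) + d) < (d : ℝ) ^ (k - 1) :=
          aux_ineq k hk ε hε d hd
        have hpows : (d : ℝ) ^ (k - 1) = (d : ℝ) ^ (k - 2) * d := by
          rw [← pow_succ]
          congr 1
          omega
        have hstepA : (d : ℝ) * (a + c) ≤ (((d : ℝ) + 1) ^ (k - 1) + d) * c := by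
          have e1 : (d : ℝ) * (a + c) = (d : ℝ) * a + (d : ℝ) * c := by ring
          have e2 : (((d : ℝ) + 1) ^ (k - 1) + d) * c
              = ((d : ℝ) + 1) ^ (k - 1) * c + (d : ℝ) * c := by ring
          linarith
        have hstepB : (1 - ε) * ((d : ℝ) * (a + c))
            ≤ (1 - ε) * ((((d : ℝ) + 1) ^ (k - 1) + d) * c) :=
          mul_le_mul_of_nonneg_left hstepA (le_of_lt hε1)
        have hstepC : (1 - ε) * ((((d : ℝ) + 1) ^ (k - 1) + d) * c)
            < (d : ℝ) ^ (k - 1) * c := by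
          rw [← mul_assoc]
          exact mul_lt_mul_of_pos_right hkey (by linarith)
        have hfin : (d : ℝ) * ((1 - ε) * (a + c)) < (d : ℝ) * (c * (d : ℝ) ^ (k - 2)) := by
          calc (d : ℝ) * ((1 - ε) * (a + c)) = (1 - ε) * ((d : ℝ) * (a + c)) := by ring
            _ ≤ (1 - ε) * ((((d : ℝ) + 1) ^ (k - 1) + d) * c) := hstepB
            _ < (d : ℝ) ^ (k - 1) * c := hstepC
            _ = (d : ℝ) * (c * (d : ℝ) ^ (k - 2)) := by rw [hpows]; ring
        exact lt_of_mul_lt_mul_left hfin (by linarith)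
    have hone : a / (a + c) + c / (a + c) = 1 := by
      field_simp
    linarith
end
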